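/- arXiv:2502.05597 — 2 statements merged into one kernel-verified Lean document; each statement's English description precedes it below -/
import Mathlib

section
/- Let f be a signature of arity n that is not identically zero and is an EO> signature (every string in its support has strictly more 1s than 0s). Then there exist an integer r > 0, a nonzero λ ∈ ℂ, and a signature g of arity r obtained from f by a sequence of ≠₂-self-loops, such that g(1^r) = λ and g(β) = 0 for every β ≠ 1^r; that is, g is a nonzero multiple of Δ₁^{⊗r}. Symmetrically, if f is not identically zero and is an EO< signature (every support string has strictly fewer 1s than 0s), then some signature obtained from f by a sequence of ≠₂-self-loops is a nonzero multiple of Δ₀^{⊗r} for some r > 0, i.e., it is nonzero exactly on the all-zero string. -/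
/-- Number of `1`s (Hamming weight) of a Boolean string. -/
def wt1 {n : ℕ} (x : Fin n → Bool) : ℕ := (Finset.univ.filter fun i => x i = true).card

/-- Number of `0`s of a Boolean string. -/
def wt0 {n : ℕ} (x : Fin n → Bool) : ℕ := (Finset.univ.filter fun i => x i = false).card

/-- The `≠₂`-self-loop of a signature `f` of arity `n+2`, connecting the
variable at position `i` with the variable at position `j` among the remaining
ones: `x ↦ f(x with xᵢ=0, xⱼ=1) + f(x with xᵢ=1, xⱼ=0)`. -/
noncomputable def selfLoop {n : ℕ} (f : (Fin (n + 2) → Bool) → ℂ)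
    (i : Fin (n + 2)) (j : Fin (n + 1)) : (Fin n → Bool) → ℂ :=
  fun x => f (i.insertNth false (j.insertNth true x)) +
    f (i.insertNth true (j.insertNth false x))

/-- `LoopReach n f m g` : the arity-`m` signature `g` is obtained from the
arity-`n` signature `f` by a finite (possibly empty) sequence of
`≠₂`-self-loops. -/
inductive LoopReach : (n : ℕ) → ((Fin n → Bool) → ℂ) → (m : ℕ) → ((Fin m → Bool) → ℂ) → Prop
  | refl (n : ℕ) (f : (Fin n → Bool) → ℂ) : LoopReach n f n f
  | step {n : ℕ} {f : (Fin n → Bool) → ℂ} {m : ℕ} {g : (Fin (m + 2) → Bool) → ℂ}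
      (h : LoopReach n f (m + 2) g) (i : Fin (m + 2)) (j : Fin (m + 1)) :
      LoopReach n f m (selfLoop g i j)

/- ### Auxiliary lemmas -/

lemma wt1_sum {n : ℕ} (x : Fin n → Bool) : wt1 x = ∑ k, (x k).toNat := by
  unfold wt1
  rw [Finset.card_filter]
  exact Finset.sum_congr rfl fun k _ => by cases x k <;> simp

lemma wt0_sum {n : ℕ} (x : Fin n → Bool) : wt0 x = ∑ k, (!(x k)).toNat := by
  unfold wt0
  rw [Finset.card_filter]
  exact Finset.sum_congr rfl fun k _ => by cases x k <;> simp

lemma wt1_insertNth {n : ℕ} (i : Fin (n + 1)) (b : Bool) (x : Fin n → Bool) :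
    wt1 (i.insertNth b x) = b.toNat + wt1 x := by
  rw [wt1_sum, wt1_sum,
    Fin.sum_univ_succAbove (fun k => Bool.toNat (@Fin.insertNth n (fun _ => Bool) i b x k)) i]
  simp

lemma wt0_insertNth {n : ℕ} (i : Fin (n + 1)) (b : Bool) (x : Fin n → Bool) :
    wt0 (i.insertNth b x) = (!b).toNat + wt0 x := by
  rw [wt0_sum, wt0_sum,
    Fin.sum_univ_succAbove (fun k => Bool.toNat (!(@Fin.insertNth n (fun _ => Bool) i b x k))) i]
  simp

lemma wt1_le {n : ℕ} (x : Fin n → Bool) : wt1 x ≤ n := by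
  unfold wt1
  exact le_trans (Finset.card_filter_le _ _) (by simp)

lemma wt1_not {n : ℕ} (x : Fin n → Bool) : wt1 (fun k => !(x k)) = wt0 x := by
  unfold wt1 wt0; congr 1; ext k; simp

lemma wt0_not {n : ℕ} (x : Fin n → Bool) : wt0 (fun k => !(x k)) = wt1 x := by
  unfold wt1 wt0; congr 1; ext k; simp

lemma removeNth_update_succAbove {n : ℕ} (p : Fin (n + 1)) (j : Fin n) (y : Bool)
    (α : Fin (n + 1) → Bool) :
    Fin.removeNth p (Function.update α (p.succAbove j) y)
      = Function.update (Fin.removeNth p α) j y := by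
  ext k
  simp [Fin.removeNth, Function.update_apply, (Fin.succAbove_right_injective (p := p)).eq_iff]

/-- If every self-loop of `f` vanishes identically, then swapping a `0` at position `p`
with a `1` at position `q` negates the value of `f`. -/
lemma swap_rel {m : ℕ} {f : (Fin (m + 2) → Bool) → ℂ}
    (hall : ∀ i j x, selfLoop f i j x = 0)
    (p q : Fin (m + 2)) (hpq : q ≠ p) (α : Fin (m + 2) → Bool)
    (hp : α p = false) (hq : α q = true) :
    f α + f (Function.update (Function.update α p true) q false) = 0 := by
  obtain ⟨j, rfl⟩ := Fin.exists_succAbove_eq hpq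
  have h := hall p j (Fin.removeNth j (Fin.removeNth p α))
  unfold selfLoop at h
  have h1 : j.insertNth true (Fin.removeNth j (Fin.removeNth p α)) = Fin.removeNth p α := by
    have hv : (Fin.removeNth p α) j = true := hq
    rw [Fin.insertNth_removeNth, ← hv, Function.update_eq_self]
  have h2 : p.insertNth false (Fin.removeNth p α) = α := by
    rw [Fin.insertNth_removeNth, ← hp, Function.update_eq_self]
  have h3 : j.insertNth false (Fin.removeNth j (Fin.removeNth p α))
      = Fin.removeNth p (Function.update α (p.succAbove j) false) := by
    rw [removeNth_update_succAbove, Fin.insertNth_removeNth]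
  have h4 : p.insertNth true (Fin.removeNth p (Function.update α (p.succAbove j) false))
      = Function.update (Function.update α p true) (p.succAbove j) false := by
    rw [Fin.insertNth_removeNth, Function.update_comm (Fin.succAbove_ne p j)]
  rw [h1, h2, h3, h4] at h
  exact h

lemma selfLoop_eo {m : ℕ} {f : (Fin (m + 2) → Bool) → ℂ}
    (hf : ∀ α, f α ≠ 0 → wt0 α < wt1 α) (i : Fin (m + 2)) (j : Fin (m + 1)) :
    ∀ x, selfLoop f i j x ≠ 0 → wt0 x < wt1 x := by
  intro x hx
  unfold selfLoop at hx
  have hor : f (i.insertNth false (j.insertNth true x)) ≠ 0 ∨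
      f (i.insertNth true (j.insertNth false x)) ≠ 0 := by
    by_contra h
    push_neg at h
    rw [h.1, h.2] at hx
    exact hx (by ring)
  rcases hor with h | h <;> have := hf _ h <;>
    simp only [wt0_insertNth, wt1_insertNth, Bool.toNat_false, Bool.toNat_true,
      Bool.not_false, Bool.not_true] at this <;> omega

lemma LoopReach.trans' {n : ℕ} {f : (Fin n → Bool) → ℂ} {m : ℕ} {g : (Fin m → Bool) → ℂ}
    {r : ℕ} {h : (Fin r → Bool) → ℂ}
    (h1 : LoopReach n f m g) (h2 : LoopReach m g r h) : LoopReach n f r h := by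
  induction h2 with
  | refl => exact h1
  | step h i j ih => exact LoopReach.step ih i j

def flipF {n : ℕ} (f : (Fin n → Bool) → ℂ) : (Fin n → Bool) → ℂ := fun x => f (fun k => !(x k))

lemma insertNth_not {n : ℕ} (i : Fin (n + 1)) (b : Bool) (x : Fin n → Bool) :
    (fun k => !(@Fin.insertNth n (fun _ => Bool) i b x k))
      = i.insertNth (!b) (fun k => !(x k)) := by
  funext k
  rcases eq_or_ne k i with rfl | hne
  · simp
  · obtain ⟨l, rfl⟩ := Fin.exists_succAbove_eq hne
    simp

lemma selfLoop_flip {m : ℕ} (f : (Fin (m + 2) → Bool) → ℂ) (i : Fin (m + 2)) (j : Fin (m + 1)) :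
    selfLoop (flipF f) i j = flipF (selfLoop f i j) := by
  funext x
  show f _ + f _ = f _ + f _
  simp only [insertNth_not, Bool.not_false, Bool.not_true]
  exact add_comm _ _

lemma flipF_flipF {n : ℕ} (f : (Fin n → Bool) → ℂ) : flipF (flipF f) = f := by
  funext x
  show f _ = f x
  congr 1
  funext k
  exact Bool.not_not _

lemma LoopReach.flip {n : ℕ} {f : (Fin n → Bool) → ℂ} {m : ℕ} {g : (Fin m → Bool) → ℂ}
    (h : LoopReach n f m g) : LoopReach n (flipF f) m (flipF g) := by
  induction h with
  | refl => exact .refl _ _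
  | step h i j ih =>
    rw [← selfLoop_flip]
    exact .step ih i j

lemma eoMain : ∀ (n : ℕ) (f : (Fin n → Bool) → ℂ), (∃ x, f x ≠ 0) →
    (∀ α, f α ≠ 0 → wt0 α < wt1 α) →
    ∃ (r : ℕ) (lam : ℂ) (g : (Fin r → Bool) → ℂ), 0 < r ∧ lam ≠ 0 ∧
      LoopReach n f r g ∧ g (fun _ => true) = lam ∧
      ∀ β : Fin r → Bool, β ≠ (fun _ => true) → g β = 0 := by
  intro n
  induction n using Nat.strong_induction_on with
  | _ n ih =>
  intro f hf heo
  by_cases hsupp : ∀ α, f α ≠ 0 → α = (fun _ => true)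
  · obtain ⟨x, hx⟩ := hf
    refine ⟨n, f (fun _ => true), f, ?_, ?_, .refl n f, rfl, ?_⟩
    · have h1 := heo x hx
      have h2 := wt1_le x
      omega
    · rw [← hsupp x hx]; exact hx
    · intro β hβ
      by_contra hb
      exact hβ (hsupp β hb)
  · push_neg at hsupp
    obtain ⟨α, hα, hαne⟩ := hsupp
    have hone : wt0 α < wt1 α := heo α hα
    have hi0 : ∃ i, α i = false := by
      by_contra h
      push_neg at h
      exact hαne (funext fun i => by simpa using h i)
    obtain ⟨i, hi⟩ := hi0
    have hwt0 : 1 ≤ wt0 α := Finset.card_pos.2 ⟨i, by simp [wt0, hi]⟩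
    have hwt1 : 2 ≤ wt1 α := by omega
    obtain ⟨j, hjmem, k, hkmem, hjk⟩ := Finset.one_lt_card.mp hwt1
    have hj : α j = true := by simpa [wt1] using hjmem
    have hk : α k = true := by simpa [wt1] using hkmem
    have hji : j ≠ i := fun h => by rw [h, hi] at hj; exact Bool.false_ne_true hj
    have hki : k ≠ i := fun h => by rw [h, hi] at hk; exact Bool.false_ne_true hk
    have hn2 : 2 ≤ n := le_trans hwt1 (wt1_le α)
    obtain ⟨m, rfl⟩ : ∃ m, n = m + 2 := ⟨n - 2, by omega⟩
    have hex : ∃ (i' : Fin (m + 2)) (j' : Fin (m + 1)) (x : Fin m → Bool),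
        selfLoop f i' j' x ≠ 0 := by
      by_contra hall
      push_neg at hall
      have r1 := swap_rel hall i j hji α hi hj
      have hβj : (Function.update (Function.update α i true) j false) j = false := by simp
      have hβk : (Function.update (Function.update α i true) j false) k = true := by
        rw [Function.update_of_ne hjk.symm, Function.update_of_ne hki]
        exact hk
      have r2 := swap_rel hall j k hjk.symm
        (Function.update (Function.update α i true) j false) hβj hβk
      have r3 := swap_rel hall i k hki α hi hk
      have e0 : Function.update (Function.update α i true) j true
          = Function.update α i true :=
        Function.update_eq_self_iff.mpr (by rw [Function.update_of_ne hji, hj])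
      have e1 : Function.update (Function.update (Function.update
            (Function.update α i true) j false) j true) k false
          = Function.update (Function.update α i true) k false := by
        rw [Function.update_idem, e0]
      rw [e1] at r2
      exact hα (by linear_combination (r1 - r2 + r3) / 2)
    obtain ⟨i', j', hne⟩ := hex
    obtain ⟨r, lam, g, hr, hlam, hreach, hg1, hg0⟩ :=
      ih m (by omega) (selfLoop f i' j') hne (selfLoop_eo heo i' j')
    exact ⟨r, lam, g, hr, hlam,
      LoopReach.trans' (LoopReach.step (.refl _ f) i' j') hreach, hg1, hg0⟩

/-- let `f` be a not identically zero signature.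
If `f` is an `EO>` signature (every support string has strictly more `1`s than
`0`s), then some sequence of `≠₂`-self-loops yields a signature `g` of arity
`r > 0` which is a nonzero multiple `λ` of `Δ₁^{⊗r}`: `g(1^r) = λ ≠ 0` and
`g(β) = 0` for all `β ≠ 1^r`.  Symmetrically, if `f` is an `EO<` signature,
then some such sequence yields a nonzero multiple of `Δ₀^{⊗r}` for some
`r > 0`, i.e. a `g` nonzero exactly on the all-zero string. -/
theorem stmt4 {n : ℕ} (f : (Fin n → Bool) → ℂ) (hf : ∃ x, f x ≠ 0) :
    ((∀ α, f α ≠ 0 → wt0 α < wt1 α) →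
      ∃ (r : ℕ) (lam : ℂ) (g : (Fin r → Bool) → ℂ), 0 < r ∧ lam ≠ 0 ∧
        LoopReach n f r g ∧ g (fun _ => true) = lam ∧
        ∀ β : Fin r → Bool, β ≠ (fun _ => true) → g β = 0) ∧
    ((∀ α, f α ≠ 0 → wt1 α < wt0 α) →
      ∃ (r : ℕ) (g : (Fin r → Bool) → ℂ), 0 < r ∧
        LoopReach n f r g ∧ g (fun _ => false) ≠ 0 ∧
        ∀ β : Fin r → Bool, β ≠ (fun _ => false) → g β = 0) := by
  constructor
  · intro heo
    exact eoMain n f hf heo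
  · intro heo
    have hf' : ∃ x, flipF f x ≠ 0 := by
      obtain ⟨x, hx⟩ := hf
      refine ⟨fun k => !(x k), ?_⟩
      show f _ ≠ 0
      convert hx using 2
      funext k
      exact Bool.not_not _
    have heo' : ∀ α, flipF f α ≠ 0 → wt0 α < wt1 α := by
      intro α hα
      have := heo _ hα
      rwa [wt1_not, wt0_not] at this
    obtain ⟨r, lam, g, hr, hlam, hreach, hg1, hg0⟩ := eoMain n (flipF f) hf' heo'
    refine ⟨r, flipF g, hr, ?_, ?_, ?_⟩
    · have h := hreach.flip
      rwa [flipF_flipF] at h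
    · show g _ ≠ 0
      have : (fun k : Fin r => !(false : Bool)) = (fun _ : Fin r => true) := by
        funext k; simp
      rw [this, hg1]
      exact hlam
    · intro β hβ
      apply hg0
      intro hcontra
      apply hβ
      funext k
      have := congrFun hcontra k
      simpa using this
end

section
/- Let S consist of the unary signature Δ₀ together with the signatures g_k for all k ≥ 1, and let ⟨S⟩ be the tensor closure of S. Let f be a signature of arity n ≥ 4. If for every index i ∈ {1,…,n} and every c ∈ {0,1} the pinned signature f^{x_i=c} lies in ⟨S⟩, then f lies in ⟨S⟩. -/
/-- The tensor product of two signatures: `(x,y) ↦ f(x)·g(y)`. -/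
noncomputable def tensorSig {a b : ℕ} (f : (Fin a → Bool) → ℂ) (g : (Fin b → Bool) → ℂ) :
    (Fin (a + b) → Bool) → ℂ :=
  fun x => f (fun i => x (Fin.castAdd b i)) * g (fun j => x (Fin.natAdd a j))

/-- Pinning the `i`-th variable of `f` to the constant `c`. -/
noncomputable def pinSig {n : ℕ} (f : (Fin (n + 1) → Bool) → ℂ) (i : Fin (n + 1)) (c : Bool) :
    (Fin n → Bool) → ℂ :=
  fun x => f (i.insertNth c x)

/-- Membership in `S = {Δ₀} ∪ {g_k : k ≥ 1}`: either the unary `Δ₀ = [1,0]`,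
or the symmetric arity-`k` signature `g_k` (`k ≥ 1`) with value `2` at Hamming
weight `0`, value `1` at Hamming weight `1`, and value `0` at weight `≥ 2`. -/
def InS {n : ℕ} (h : (Fin n → Bool) → ℂ) : Prop :=
  (n = 1 ∧ ∀ x, h x = if wt1 x = 0 then 1 else 0) ∨
  (1 ≤ n ∧ ∀ x, h x = if wt1 x = 0 then 2 else if wt1 x = 1 then 1 else 0)

/-- Tensor products of finitely many (at least one) members of `S`. -/
inductive TensorOfS : (m : ℕ) → ((Fin m → Bool) → ℂ) → Prop
  | atom {m : ℕ} {h : (Fin m → Bool) → ℂ} (hs : InS h) : TensorOfS m h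
  | tensor {a b : ℕ} {f : (Fin a → Bool) → ℂ} {g : (Fin b → Bool) → ℂ}
      (hf : TensorOfS a f) (hg : TensorOfS b g) : TensorOfS (a + b) (tensorSig f g)

/-- The tensor closure `⟨S⟩`: signatures that are identically `0` or equal, up
to a nonzero scalar and a permutation of the variables, to a tensor product of
finitely many members of `S`. -/
def InTC {n : ℕ} (f : (Fin n → Bool) → ℂ) : Prop :=
  (∀ x, f x = 0) ∨
  ∃ (c : ℂ), c ≠ 0 ∧ ∃ (σ : Equiv.Perm (Fin n)) (h : (Fin n → Bool) → ℂ),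
    TensorOfS n h ∧ ∀ x, f x = c * h (x ∘ σ)

/-! ### basics -/
open Classical in
noncomputable instance (priority := low) : ∀ (p : Prop), Decidable p := fun p => Classical.propDecidable p

/-- all-zero string -/
def zb {n : ℕ} : Fin n → Bool := fun _ => false

/-- singleton string -/
def sg {n : ℕ} (i : Fin n) : Fin n → Bool := fun j => decide (j = i)

/-- pair string -/
def pr {n : ℕ} (i j : Fin n) : Fin n → Bool := fun k => decide (k = i) || decide (k = j)

lemma wt1_eq_sum {n : ℕ} (x : Fin n → Bool) : wt1 x = ∑ i, if x i = true then 1 else 0 := by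
  classical
  simpa [wt1] using Finset.card_filter (fun i => x i = true) Finset.univ

lemma wt1_zb {n : ℕ} : wt1 (zb (n := n)) = 0 := by simp [wt1_eq_sum, zb]

lemma wt1_sg {n : ℕ} (i : Fin n) : wt1 (sg i) = 1 := by
  classical
  rw [wt1_eq_sum, Fintype.sum_eq_single i]
  · simp [sg]
  · intro j hj; simp [sg, hj]

lemma wt1_pr {n : ℕ} {i j : Fin n} (h : i ≠ j) : wt1 (pr i j) = 2 := by
  classical
  have : (Finset.univ.filter fun k => pr i j k = true) = {i, j} := by
    ext k; simp [pr]
  simp [wt1, this, Finset.card_insert_of_notMem, h]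

lemma wt1_eq_zero {n : ℕ} {x : Fin n → Bool} (h : wt1 x = 0) : x = zb := by
  classical
  funext i
  by_contra hb
  have hx : x i = true := by cases hxi : x i <;> simp_all [zb]
  have : i ∈ Finset.univ.filter fun j => x j = true := by simp [hx]
  have := Finset.card_pos.2 ⟨i, this⟩
  unfold wt1 at h; omega

lemma exists_true_of_wt1_pos {n : ℕ} {x : Fin n → Bool} (h : 1 ≤ wt1 x) : ∃ i, x i = true := by
  classical
  unfold wt1 at h
  have : (Finset.univ.filter fun j => x j = true).Nonempty := Finset.card_pos.1 (by omega)
  obtain ⟨i, hi⟩ := this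
  exact ⟨i, by simpa using hi⟩

lemma exists_two_of_wt1_ge_two {n : ℕ} {x : Fin n → Bool} (h : 2 ≤ wt1 x) :
    ∃ i j, i ≠ j ∧ x i = true ∧ x j = true := by
  classical
  unfold wt1 at h
  have := Finset.one_lt_card.1 (show 1 < (Finset.univ.filter fun j => x j = true).card by omega)
  obtain ⟨i, hi, j, hj, hij⟩ := this
  exact ⟨i, j, hij, by simpa using hi, by simpa using hj⟩

lemma wt1_le_one {n : ℕ} {x : Fin n → Bool}
    (h : ∀ i j, i ≠ j → x i = true → x j = true → False) : wt1 x ≤ 1 := by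
  by_contra hc
  obtain ⟨i, j, hij, hi, hj⟩ := exists_two_of_wt1_ge_two (x := x) (by omega)
  exact h i j hij hi hj

/-! ### Std -/

def Good {n : ℕ} (f : (Fin n → Bool) → ℂ) (x : Fin n → Bool) : Prop :=
  (∀ i, x i = true → f (sg i) ≠ 0) ∧
  (∀ i j, i ≠ j → x i = true → x j = true → f (pr i j) ≠ 0)

noncomputable def q : ℂ := (2 : ℂ)⁻¹

lemma q_ne_zero : q ≠ 0 := by norm_num [q]

def Std {n : ℕ} (f : (Fin n → Bool) → ℂ) : Prop :=
  f zb ≠ 0 ∧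
  (∀ x, f x = if Good f x then f zb * q ^ wt1 x else 0) ∧
  (∀ i j k, i ≠ j → j ≠ k → i ≠ k → f (sg i) ≠ 0 → f (sg j) ≠ 0 → f (sg k) ≠ 0 →
    f (pr i j) = 0 → f (pr j k) = 0 → f (pr i k) = 0)

lemma Std.ne_zero_iff_good {n : ℕ} {f : (Fin n → Bool) → ℂ} (hf : Std f) (x : Fin n → Bool) :
    f x ≠ 0 ↔ Good f x := by
  rw [hf.2.1 x]
  by_cases h : Good f x <;> simp [h, hf.1, q_ne_zero, pow_ne_zero]

lemma good_zb {n : ℕ} (f : (Fin n → Bool) → ℂ) : Good f zb := by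
  constructor <;> intro i <;> simp [zb]

lemma good_sg_iff {n : ℕ} (f : (Fin n → Bool) → ℂ) (i : Fin n) :
    Good f (sg i) ↔ f (sg i) ≠ 0 := by
  constructor
  · intro hg; exact hg.1 i (by simp [sg])
  · intro h
    refine ⟨fun j hj => ?_, fun j k hjk hj hk => ?_⟩
    · have : j = i := by simpa [sg] using hj
      subst this; exact h
    · have hji : j = i := by simpa [sg] using hj
      have hki : k = i := by simpa [sg] using hk
      subst hji; subst hki; exact absurd rfl hjk

lemma good_mono {n : ℕ} (f : (Fin n → Bool) → ℂ) {x y : Fin n → Bool}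
    (hxy : ∀ i, y i = true → x i = true) (hx : Good f x) : Good f y :=
  ⟨fun i hi => hx.1 i (hxy i hi), fun i j hij hi hj => hx.2 i j hij (hxy i hi) (hxy j hj)⟩

lemma Std.sg_val {n : ℕ} {f : (Fin n → Bool) → ℂ} (hf : Std f) {i : Fin n}
    (h : f (sg i) ≠ 0) : f (sg i) = f zb * q := by
  have := hf.2.1 (sg i)
  rw [if_pos ((good_sg_iff f i).2 h)] at this
  simpa [wt1_sg] using this
/-! ### atoms -/

lemma two_le_wt1 {n : ℕ} {x : Fin n → Bool} {i j : Fin n} (hij : i ≠ j)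
    (hi : x i = true) (hj : x j = true) : 2 ≤ wt1 x := by
  classical
  unfold wt1
  exact Finset.one_lt_card.2 ⟨i, by simp [hi], j, by simp [hj], hij⟩

lemma pr_comm {n : ℕ} (i j : Fin n) : pr i j = pr j i := by
  funext k; simp [pr, Bool.or_comm]

lemma std_of_inS {n : ℕ} {h : (Fin n → Bool) → ℂ} (hs : InS h) : Std h := by
  rcases hs with ⟨hn, hv⟩ | ⟨hn, hv⟩
  · subst hn
    have hzb : h zb = 1 := by simp [hv, wt1_zb]
    have hsg : ∀ i, h (sg i) = 0 := fun i => by simp [hv, wt1_sg]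
    refine ⟨by simp [hzb], fun x => ?_, fun i j k hij => absurd (Subsingleton.elim i j) hij⟩
    rcases Nat.eq_zero_or_pos (wt1 x) with h0 | h1
    · rw [wt1_eq_zero h0, if_pos (good_zb h), hzb, wt1_zb]; simp
    · obtain ⟨i, hi⟩ := exists_true_of_wt1_pos h1
      rw [if_neg (fun hg => hg.1 i hi (hsg i)), hv]
      have hne : wt1 x ≠ 0 := by omega
      simp [hne]
  · have hzb : h zb = 2 := by simp [hv, wt1_zb]
    have hsg : ∀ i, h (sg i) = 1 := fun i => by simp [hv, wt1_sg]
    have hpr : ∀ (i j : Fin n), i ≠ j → h (pr i j) = 0 := fun i j hij => by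
      simp [hv, wt1_pr hij]
    have hgood : ∀ x, Good h x ↔ wt1 x ≤ 1 := by
      intro x
      constructor
      · intro hg
        refine wt1_le_one fun i j hij hi hj => ?_
        exact hg.2 i j hij hi hj (hpr i j hij)
      · intro hw
        refine ⟨fun i _ => by simp [hsg], fun i j hij hi hj => ?_⟩
        exact absurd hw (by have := two_le_wt1 hij hi hj; omega)
    refine ⟨by simp [hzb], fun x => ?_, fun i j k hij hjk hik _ _ _ _ _ => hpr i k hik⟩
    by_cases hg : Good h x
    · rw [if_pos hg, hzb]
      have hw := (hgood x).1 hg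
      interval_cases hwx : wt1 x
      · simp [hv, hwx]
      · simp [hv, hwx, q]
    · rw [if_neg hg, hv]
      have hw : ¬ wt1 x ≤ 1 := fun hw => hg ((hgood x).2 hw)
      have h1 : wt1 x ≠ 0 := by omega
      have h2 : wt1 x ≠ 1 := by omega
      simp [h1, h2]

/-! ### Std closure: scalar, reindex -/

lemma good_smul {n : ℕ} {f : (Fin n → Bool) → ℂ} {c : ℂ} (hc : c ≠ 0) (x : Fin n → Bool) :
    Good (fun y => c * f y) x ↔ Good f x := by
  unfold Good
  simp [hc]

lemma std_smul {n : ℕ} {f : (Fin n → Bool) → ℂ} {c : ℂ} (hc : c ≠ 0) (hf : Std f) :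
    Std (fun y => c * f y) := by
  refine ⟨mul_ne_zero hc hf.1, fun x => ?_, fun i j k hij hjk hik s1 s2 s3 p1 p2 => ?_⟩
  · show c * f x = if Good (fun y => c * f y) x then c * f zb * q ^ wt1 x else 0
    rw [hf.2.1 x]
    by_cases hg : Good f x
    · rw [if_pos ((good_smul hc x).2 hg), if_pos hg]; ring
    · rw [if_neg (fun hh => hg ((good_smul hc x).1 hh)), if_neg hg, mul_zero]
  · have := hf.2.2 i j k hij hjk hik
      (by intro h0; exact s1 (by show c * f (sg i) = 0; rw [h0, mul_zero]))
      (by intro h0; exact s2 (by show c * f (sg j) = 0; rw [h0, mul_zero]))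
      (by intro h0; exact s3 (by show c * f (sg k) = 0; rw [h0, mul_zero]))
      (by simpa [hc] using p1) (by simpa [hc] using p2)
    show c * f (pr i k) = 0
    rw [this, mul_zero]

lemma reindex_zb {k m : ℕ} (e : Fin k ≃ Fin m) :
    (fun i => (zb : Fin k → Bool) (e.symm i)) = (zb : Fin m → Bool) := rfl

lemma reindex_sg {k m : ℕ} (e : Fin k ≃ Fin m) (j : Fin k) :
    (fun i => sg j (e.symm i)) = sg (e j) := by
  funext i; simp [sg, decide_eq_decide, Equiv.symm_apply_eq]

lemma reindex_pr {k m : ℕ} (e : Fin k ≃ Fin m) (j j' : Fin k) :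
    (fun i => pr j j' (e.symm i)) = pr (e j) (e j') := by
  funext i; simp [pr, decide_eq_decide, Equiv.symm_apply_eq]

lemma wt1_reindex {k m : ℕ} (e : Fin k ≃ Fin m) (x : Fin k → Bool) :
    wt1 (fun i => x (e.symm i)) = wt1 x := by
  classical
  rw [wt1_eq_sum, wt1_eq_sum]
  exact Equiv.sum_comp e.symm (fun j => if x j = true then 1 else 0)

lemma good_reindex {k m : ℕ} (e : Fin k ≃ Fin m) (f : (Fin m → Bool) → ℂ) (x : Fin k → Bool) :
    Good (fun y => f (fun i => y (e.symm i))) x ↔ Good f (fun i => x (e.symm i)) := by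
  constructor
  · rintro ⟨h1, h2⟩
    constructor
    · intro i hi
      have key : f (sg (e (e.symm i))) ≠ 0 := by
        rw [← reindex_sg e (e.symm i)]; exact h1 (e.symm i) hi
      rwa [e.apply_symm_apply] at key
    · intro i j hij hi hj
      have key : f (pr (e (e.symm i)) (e (e.symm j))) ≠ 0 := by
        rw [← reindex_pr e (e.symm i) (e.symm j)]
        exact h2 (e.symm i) (e.symm j) (fun hh => hij (by simpa using congrArg e hh)) hi hj
      rwa [e.apply_symm_apply, e.apply_symm_apply] at key
  · rintro ⟨h1, h2⟩
    constructor
    · intro i hi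
      show f _ ≠ 0
      rw [reindex_sg]
      exact h1 (e i) (by simpa using hi)
    · intro i j hij hi hj
      show f _ ≠ 0
      rw [reindex_pr]
      exact h2 (e i) (e j) (fun hh => hij (e.injective hh))
        (by simpa using hi) (by simpa using hj)

lemma std_reindex {k m : ℕ} (e : Fin k ≃ Fin m) {f : (Fin m → Bool) → ℂ} (hf : Std f) :
    Std (fun y => f (fun i => y (e.symm i))) := by
  refine ⟨hf.1, fun x => ?_, fun i j k' hij hjk hik s1 s2 s3 p1 p2 => ?_⟩
  · by_cases hg : Good f (fun i => x (e.symm i))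
    · have h2 := (good_reindex e f x).2 hg
      rw [if_pos h2]
      show f (fun i => x (e.symm i)) = f zb * q ^ wt1 x
      rw [hf.2.1 (fun i => x (e.symm i)), if_pos hg, wt1_reindex e x]
    · have h2 : ¬ Good (fun y => f (fun i => y (e.symm i))) x :=
        fun hh => hg ((good_reindex e f x).1 hh)
      rw [if_neg h2]
      show f (fun i => x (e.symm i)) = 0
      rw [hf.2.1 (fun i => x (e.symm i)), if_neg hg]
  · have s1' : f (sg (e i)) ≠ 0 := by rw [← reindex_sg e i]; exact s1
    have s2' : f (sg (e j)) ≠ 0 := by rw [← reindex_sg e j]; exact s2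
    have s3' : f (sg (e k')) ≠ 0 := by rw [← reindex_sg e k']; exact s3
    have p1' : f (pr (e i) (e j)) = 0 := by rw [← reindex_pr e i j]; exact p1
    have p2' : f (pr (e j) (e k')) = 0 := by rw [← reindex_pr e j k']; exact p2
    show f _ = 0
    rw [reindex_pr]
    exact hf.2.2 (e i) (e j) (e k') (fun hh => hij (e.injective hh))
      (fun hh => hjk (e.injective hh)) (fun hh => hik (e.injective hh)) s1' s2' s3' p1' p2'
/-! ### tensor -/

lemma ca_eq_ca {a b : ℕ} {i j : Fin a} : Fin.castAdd b i = Fin.castAdd b j ↔ i = j := by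
  simp [Fin.ext_iff]

lemma na_eq_na {a b : ℕ} {i j : Fin b} : Fin.natAdd a i = Fin.natAdd a j ↔ i = j := by
  simp [Fin.ext_iff]

lemma ca_ne_na {a b : ℕ} {i : Fin a} {j : Fin b} : Fin.castAdd b i ≠ Fin.natAdd a j := by
  simp [Fin.ext_iff]; omega

lemma na_ne_ca {a b : ℕ} {i : Fin a} {j : Fin b} : Fin.natAdd a j ≠ Fin.castAdd b i := by
  simp [Fin.ext_iff]; omega

lemma addCases_rep {a b : ℕ} (k : Fin (a + b)) :
    (∃ i, k = Fin.castAdd b i) ∨ (∃ j, k = Fin.natAdd a j) :=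
  Fin.addCases (fun i => Or.inl ⟨i, rfl⟩) (fun j => Or.inr ⟨j, rfl⟩) k

lemma sgL_l {a b : ℕ} (i : Fin a) :
    (fun t => sg (Fin.castAdd b i) (Fin.castAdd b t)) = sg i := by
  funext t; simp [sg, decide_eq_decide, ca_eq_ca]

lemma sgL_r {a b : ℕ} (i : Fin a) :
    (fun t => sg (Fin.castAdd b i) (Fin.natAdd a t)) = (zb : Fin b → Bool) := by
  funext t; simp [sg, zb, na_ne_ca]

lemma sgR_l {a b : ℕ} (j : Fin b) :
    (fun t => sg (Fin.natAdd a j) (Fin.castAdd b t)) = (zb : Fin a → Bool) := by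
  funext t; simp [sg, zb, ca_ne_na]

lemma sgR_r {a b : ℕ} (j : Fin b) :
    (fun t => sg (Fin.natAdd a j) (Fin.natAdd a t)) = sg j := by
  funext t; simp [sg, decide_eq_decide, na_eq_na]

lemma prLL_l {a b : ℕ} (i j : Fin a) :
    (fun t => pr (Fin.castAdd b i) (Fin.castAdd b j) (Fin.castAdd b t)) = pr i j := by
  funext t; simp [pr, decide_eq_decide, ca_eq_ca]

lemma prLL_r {a b : ℕ} (i j : Fin a) :
    (fun t => pr (Fin.castAdd b i) (Fin.castAdd b j) (Fin.natAdd a t)) = (zb : Fin b → Bool) := by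
  funext t; simp [pr, zb, na_ne_ca]

lemma prRR_l {a b : ℕ} (i j : Fin b) :
    (fun t => pr (Fin.natAdd a i) (Fin.natAdd a j) (Fin.castAdd b t)) = (zb : Fin a → Bool) := by
  funext t; simp [pr, zb, ca_ne_na]

lemma prRR_r {a b : ℕ} (i j : Fin b) :
    (fun t => pr (Fin.natAdd a i) (Fin.natAdd a j) (Fin.natAdd a t)) = pr i j := by
  funext t; simp [pr, decide_eq_decide, na_eq_na]

lemma prLR_l {a b : ℕ} (i : Fin a) (j : Fin b) :
    (fun t => pr (Fin.castAdd b i) (Fin.natAdd a j) (Fin.castAdd b t)) = sg i := by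
  funext t; simp [pr, sg, decide_eq_decide, ca_eq_ca, ca_ne_na]

lemma prLR_r {a b : ℕ} (i : Fin a) (j : Fin b) :
    (fun t => pr (Fin.castAdd b i) (Fin.natAdd a j) (Fin.natAdd a t)) = sg j := by
  funext t; simp [pr, sg, decide_eq_decide, na_eq_na, na_ne_ca]

lemma restrict_zb_l {a b : ℕ} :
    (fun t => (zb : Fin (a+b) → Bool) (Fin.castAdd b t)) = (zb : Fin a → Bool) := rfl

lemma restrict_zb_r {a b : ℕ} :
    (fun t => (zb : Fin (a+b) → Bool) (Fin.natAdd a t)) = (zb : Fin b → Bool) := rfl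

lemma wt1_add {a b : ℕ} (x : Fin (a + b) → Bool) :
    wt1 x = wt1 (fun i => x (Fin.castAdd b i)) + wt1 (fun j => x (Fin.natAdd a j)) := by
  classical
  rw [wt1_eq_sum, wt1_eq_sum, wt1_eq_sum]
  exact Fin.sum_univ_add (fun i => if x i = true then 1 else 0)

section TensorStd

variable {a b : ℕ} {F : (Fin a → Bool) → ℂ} {G : (Fin b → Bool) → ℂ}

lemma tensor_zb : tensorSig F G zb = F zb * G zb := rfl

lemma tensor_sgL (i : Fin a) : tensorSig F G (sg (Fin.castAdd b i)) = F (sg i) * G zb := by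
  show F _ * G _ = _; rw [sgL_l, sgL_r]

lemma tensor_sgR (j : Fin b) : tensorSig F G (sg (Fin.natAdd a j)) = F zb * G (sg j) := by
  show F _ * G _ = _; rw [sgR_l, sgR_r]

lemma tensor_prLL (i j : Fin a) :
    tensorSig F G (pr (Fin.castAdd b i) (Fin.castAdd b j)) = F (pr i j) * G zb := by
  show F _ * G _ = _; rw [prLL_l, prLL_r]

lemma tensor_prRR (i j : Fin b) :
    tensorSig F G (pr (Fin.natAdd a i) (Fin.natAdd a j)) = F zb * G (pr i j) := by
  show F _ * G _ = _; rw [prRR_l, prRR_r]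

lemma tensor_prLR (i : Fin a) (j : Fin b) :
    tensorSig F G (pr (Fin.castAdd b i) (Fin.natAdd a j)) = F (sg i) * G (sg j) := by
  show F _ * G _ = _; rw [prLR_l, prLR_r]

lemma good_tensor (hF : Std F) (hG : Std G) (x : Fin (a + b) → Bool) :
    Good (tensorSig F G) x ↔
      Good F (fun i => x (Fin.castAdd b i)) ∧ Good G (fun j => x (Fin.natAdd a j)) := by
  constructor
  · rintro ⟨h1, h2⟩
    refine ⟨⟨fun i hi => ?_, fun i j hij hi hj => ?_⟩, ⟨fun i hi => ?_, fun i j hij hi hj => ?_⟩⟩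
    · have := h1 (Fin.castAdd b i) hi
      rw [tensor_sgL] at this
      exact fun h0 => this (by rw [h0, zero_mul])
    · have := h2 (Fin.castAdd b i) (Fin.castAdd b j) (fun hh => hij (ca_eq_ca.1 hh)) hi hj
      rw [tensor_prLL] at this
      exact fun h0 => this (by rw [h0, zero_mul])
    · have := h1 (Fin.natAdd a i) hi
      rw [tensor_sgR] at this
      exact fun h0 => this (by rw [h0, mul_zero])
    · have := h2 (Fin.natAdd a i) (Fin.natAdd a j) (fun hh => hij (na_eq_na.1 hh)) hi hj
      rw [tensor_prRR] at this
      exact fun h0 => this (by rw [h0, mul_zero])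
  · rintro ⟨hFg, hGg⟩
    constructor
    · intro k hk
      rcases addCases_rep k with ⟨i, rfl⟩ | ⟨j, rfl⟩
      · rw [tensor_sgL]; exact mul_ne_zero (hFg.1 i hk) hG.1
      · rw [tensor_sgR]; exact mul_ne_zero hF.1 (hGg.1 j hk)
    · intro k k' hne hk hk'
      rcases addCases_rep k with ⟨i, rfl⟩ | ⟨i, rfl⟩ <;>
        rcases addCases_rep k' with ⟨j, rfl⟩ | ⟨j, rfl⟩
      · rw [tensor_prLL]; exact mul_ne_zero (hFg.2 i j (fun hh => hne (hh ▸ rfl)) hk hk') hG.1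
      · rw [tensor_prLR]; exact mul_ne_zero (hFg.1 i hk) (hGg.1 j hk')
      · rw [pr_comm, tensor_prLR]; exact mul_ne_zero (hFg.1 j hk') (hGg.1 i hk)
      · rw [tensor_prRR]; exact mul_ne_zero hF.1 (hGg.2 i j (fun hh => hne (hh ▸ rfl)) hk hk')

lemma std_tensor (hF : Std F) (hG : Std G) : Std (tensorSig F G) := by
  refine ⟨?_, fun x => ?_, ?_⟩
  · rw [tensor_zb]; exact mul_ne_zero hF.1 hG.1
  · by_cases hg : Good (tensorSig F G) x
    · rw [if_pos hg]
      obtain ⟨hFg, hGg⟩ := (good_tensor hF hG x).1 hg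
      show F _ * G _ = _
      rw [hF.2.1, hG.2.1, if_pos hFg, if_pos hGg, tensor_zb, wt1_add x, pow_add]
      ring
    · rw [if_neg hg]
      have : ¬ (Good F (fun i => x (Fin.castAdd b i)) ∧ Good G (fun j => x (Fin.natAdd a j))) :=
        fun hh => hg ((good_tensor hF hG x).2 hh)
      show F _ * G _ = 0
      by_cases hFg : Good F (fun i => x (Fin.castAdd b i))
      · have hGg : ¬ Good G (fun j => x (Fin.natAdd a j)) := fun hh => this ⟨hFg, hh⟩
        rw [hG.2.1, if_neg hGg, mul_zero]
      · rw [hF.2.1, if_neg hFg, zero_mul]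
  · intro i j k hij hjk hik s1 s2 s3 p1 p2
    rcases addCases_rep i with ⟨i', rfl⟩ | ⟨i', rfl⟩ <;>
      rcases addCases_rep j with ⟨j', rfl⟩ | ⟨j', rfl⟩ <;>
        rcases addCases_rep k with ⟨k', rfl⟩ | ⟨k', rfl⟩
    · -- LLL
      rw [tensor_sgL] at s1 s2 s3
      rw [tensor_prLL] at p1 p2 ⊢
      have hF1 : F (sg i') ≠ 0 := fun h0 => s1 (by rw [h0, zero_mul])
      have hF2 : F (sg j') ≠ 0 := fun h0 => s2 (by rw [h0, zero_mul])
      have hF3 : F (sg k') ≠ 0 := fun h0 => s3 (by rw [h0, zero_mul])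
      have := hF.2.2 i' j' k' (fun hh => hij (hh ▸ rfl)) (fun hh => hjk (hh ▸ rfl))
        (fun hh => hik (hh ▸ rfl)) hF1 hF2 hF3
        (by rcases mul_eq_zero.1 p1 with h | h; exact h; exact absurd h hG.1)
        (by rcases mul_eq_zero.1 p2 with h | h; exact h; exact absurd h hG.1)
      rw [this, zero_mul]
    · -- LLR : conflict j-k is cross, impossible
      rw [tensor_sgL] at s2; rw [tensor_sgR] at s3
      rw [tensor_prLR] at p2
      exact absurd p2 (mul_ne_zero (fun h0 => s2 (by rw [h0, zero_mul]))
        (fun h0 => s3 (by rw [h0, mul_zero])))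
    · -- LRL : conflict i-j cross
      rw [tensor_sgL] at s1; rw [tensor_sgR] at s2
      rw [tensor_prLR] at p1
      exact absurd p1 (mul_ne_zero (fun h0 => s1 (by rw [h0, zero_mul]))
        (fun h0 => s2 (by rw [h0, mul_zero])))
    · -- LRR : conflict i-j cross
      rw [tensor_sgL] at s1; rw [tensor_sgR] at s2
      rw [tensor_prLR] at p1
      exact absurd p1 (mul_ne_zero (fun h0 => s1 (by rw [h0, zero_mul]))
        (fun h0 => s2 (by rw [h0, mul_zero])))
    · -- RLL : conflict i-j cross
      rw [tensor_sgR] at s1; rw [tensor_sgL] at s2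
      rw [pr_comm, tensor_prLR] at p1
      exact absurd p1 (mul_ne_zero (fun h0 => s2 (by rw [h0, zero_mul]))
        (fun h0 => s1 (by rw [h0, mul_zero])))
    · -- RLR : conflict i-j cross
      rw [tensor_sgR] at s1; rw [tensor_sgL] at s2
      rw [pr_comm, tensor_prLR] at p1
      exact absurd p1 (mul_ne_zero (fun h0 => s2 (by rw [h0, zero_mul]))
        (fun h0 => s1 (by rw [h0, mul_zero])))
    · -- RRL : conflict j-k cross
      rw [tensor_sgL] at s3; rw [tensor_sgR] at s2
      rw [pr_comm, tensor_prLR] at p2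
      exact absurd p2 (mul_ne_zero (fun h0 => s3 (by rw [h0, zero_mul]))
        (fun h0 => s2 (by rw [h0, mul_zero])))
    · -- RRR
      rw [tensor_sgR] at s1 s2 s3
      rw [tensor_prRR] at p1 p2 ⊢
      have hG1 : G (sg i') ≠ 0 := fun h0 => s1 (by rw [h0, mul_zero])
      have hG2 : G (sg j') ≠ 0 := fun h0 => s2 (by rw [h0, mul_zero])
      have hG3 : G (sg k') ≠ 0 := fun h0 => s3 (by rw [h0, mul_zero])
      have := hG.2.2 i' j' k' (fun hh => hij (hh ▸ rfl)) (fun hh => hjk (hh ▸ rfl))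
        (fun hh => hik (hh ▸ rfl)) hG1 hG2 hG3
        (by rcases mul_eq_zero.1 p1 with h | h; exact absurd h hF.1; exact h)
        (by rcases mul_eq_zero.1 p2 with h | h; exact absurd h hF.1; exact h)
      rw [this, mul_zero]

end TensorStd

lemma tensorOfS_std {m : ℕ} {h : (Fin m → Bool) → ℂ} (ht : TensorOfS m h) : Std h := by
  induction ht with
  | atom hs => exact std_of_inS hs
  | tensor hf hg ihf ihg => exact std_tensor ihf ihg

lemma inTC_std {m : ℕ} {f : (Fin m → Bool) → ℂ} (hf : InTC f) :
    (∀ x, f x = 0) ∨ Std f := by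
  rcases hf with hz | ⟨c, hc, σ, h, ht, hfx⟩
  · exact Or.inl hz
  · right
    have hstd : Std (fun x : Fin m → Bool => h (fun i => x (σ.symm.symm i))) :=
      std_reindex σ.symm (tensorOfS_std ht)
    have : Std (fun x : Fin m → Bool => c * h (fun i => x (σ.symm.symm i))) :=
      std_smul hc hstd
    have hfe : f = fun x : Fin m → Bool => c * h (fun i => x (σ.symm.symm i)) := by
      funext x; rw [hfx x]; rfl
    rw [hfe]; exact this
/-! ### InTC closure -/

lemma pr_self {n : ℕ} (i : Fin n) : pr i i = sg i := by
  funext k; simp [pr, sg]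

lemma inTC_congr {m : ℕ} {f g : (Fin m → Bool) → ℂ} (h : ∀ x, f x = g x) (hg : InTC g) :
    InTC f := by
  have : f = g := funext h
  rw [this]; exact hg

lemma inTC_smul {m : ℕ} {f : (Fin m → Bool) → ℂ} {c : ℂ} (hc : c ≠ 0) (hf : InTC f) :
    InTC (fun x => c * f x) := by
  rcases hf with hz | ⟨d, hd, σ, h, ht, hfx⟩
  · left; intro x; show c * f x = 0; rw [hz x, mul_zero]
  · right
    exact ⟨c * d, mul_ne_zero hc hd, σ, h, ht, fun x => by
      show c * f x = _; rw [hfx x]; ring⟩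

lemma inTC_atom {m : ℕ} {f h : (Fin m → Bool) → ℂ} {c : ℂ} (hc : c ≠ 0) (hs : InS h)
    (hfx : ∀ x, f x = c * h x) : InTC f := by
  right
  refine ⟨c, hc, 1, h, .atom hs, fun x => ?_⟩
  rw [hfx x]
  rfl

lemma inTC_reindex {k m : ℕ} (e : Fin k ≃ Fin m) (f : (Fin m → Bool) → ℂ)
    (h : InTC (fun x : Fin k → Bool => f (fun i => x (e.symm i)))) : InTC f := by
  have hkm : k = m := by simpa using Fintype.card_congr e
  subst hkm
  have hfx : ∀ x : Fin k → Bool,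
      f x = (fun y : Fin k → Bool => f (fun i => y (e.symm i))) (fun i => x (e i)) := by
    intro x
    show f x = f _
    congr 1
    funext i
    show x i = x (e (e.symm i))
    rw [e.apply_symm_apply]
  rcases h with hz | ⟨c, hc, σ, h', ht, hgx⟩
  · left; intro x; exact (hfx x).trans (hz (fun i => x (e i)))
  · right
    exact ⟨c, hc, σ.trans e, h', ht, fun x => (hfx x).trans (hgx (fun i => x (e i)))⟩

lemma inTC_tensor {a b : ℕ} {F : (Fin a → Bool) → ℂ} {G : (Fin b → Bool) → ℂ}
    (hF : InTC F) (hG : InTC G) : InTC (tensorSig F G) := by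
  rcases hF with hz | ⟨c, hc, σ, h, ht, hFx⟩
  · left; intro x; show F _ * G _ = 0; rw [hz _, zero_mul]
  rcases hG with hz | ⟨d, hd, τ, h', ht', hGx⟩
  · left; intro x; show F _ * G _ = 0; rw [hz _, mul_zero]
  right
  set ρ : Equiv.Perm (Fin (a + b)) := finSumFinEquiv.permCongr (Equiv.sumCongr σ τ) with hρ
  have hρL : ∀ i : Fin a, ρ (Fin.castAdd b i) = Fin.castAdd b (σ i) := by
    intro i
    simp [hρ, Equiv.permCongr_apply, finSumFinEquiv_symm_apply_castAdd]
  have hρR : ∀ j : Fin b, ρ (Fin.natAdd a j) = Fin.natAdd a (τ j) := by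
    intro j
    simp [hρ, Equiv.permCongr_apply, finSumFinEquiv_symm_apply_natAdd]
  refine ⟨c * d, mul_ne_zero hc hd, ρ, tensorSig h h', .tensor ht ht', fun x => ?_⟩
  show F _ * G _ = (c * d) * (h _ * h' _)
  rw [hFx, hGx]
  have e1 : ((fun i => x (Fin.castAdd b i)) ∘ ⇑σ) = fun i => (x ∘ ⇑ρ) (Fin.castAdd b i) := by
    funext i; simp [Function.comp, hρL]
  have e2 : ((fun j => x (Fin.natAdd a j)) ∘ ⇑τ) = fun j => (x ∘ ⇑ρ) (Fin.natAdd a j) := by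
    funext j; simp [Function.comp, hρR]
  rw [e1, e2]; ring

/-! ### append lemmas -/

lemma app_zb {a b : ℕ} : Fin.append (zb : Fin a → Bool) (zb : Fin b → Bool) = zb := by
  funext k
  rcases addCases_rep k with ⟨i, rfl⟩ | ⟨j, rfl⟩
  · rw [Fin.append_left]; rfl
  · rw [Fin.append_right]; rfl

lemma app_sgL {a b : ℕ} (i : Fin a) :
    Fin.append (sg i) (zb : Fin b → Bool) = sg (Fin.castAdd b i) := by
  funext k
  rcases addCases_rep k with ⟨t, rfl⟩ | ⟨t, rfl⟩
  · rw [Fin.append_left]; simp [sg, decide_eq_decide, ca_eq_ca]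
  · rw [Fin.append_right]; simp [sg, zb, na_ne_ca]

lemma app_sgR {a b : ℕ} (j : Fin b) :
    Fin.append (zb : Fin a → Bool) (sg j) = sg (Fin.natAdd a j) := by
  funext k
  rcases addCases_rep k with ⟨t, rfl⟩ | ⟨t, rfl⟩
  · rw [Fin.append_left]; simp [sg, zb, ca_ne_na]
  · rw [Fin.append_right]; simp [sg, decide_eq_decide, na_eq_na]

lemma app_prLL {a b : ℕ} (i j : Fin a) :
    Fin.append (pr i j) (zb : Fin b → Bool) = pr (Fin.castAdd b i) (Fin.castAdd b j) := by
  funext k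
  rcases addCases_rep k with ⟨t, rfl⟩ | ⟨t, rfl⟩
  · rw [Fin.append_left]; simp [pr, decide_eq_decide, ca_eq_ca]
  · rw [Fin.append_right]; simp [pr, zb, na_ne_ca]

lemma app_prRR {a b : ℕ} (i j : Fin b) :
    Fin.append (zb : Fin a → Bool) (pr i j) = pr (Fin.natAdd a i) (Fin.natAdd a j) := by
  funext k
  rcases addCases_rep k with ⟨t, rfl⟩ | ⟨t, rfl⟩
  · rw [Fin.append_left]; simp [pr, zb, ca_ne_na]
  · rw [Fin.append_right]; simp [pr, decide_eq_decide, na_eq_na]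

lemma restrict_app_l {a b : ℕ} (u : Fin a → Bool) (v : Fin b → Bool) :
    (fun i => Fin.append u v (Fin.castAdd b i)) = u := by
  funext i; rw [Fin.append_left]

lemma restrict_app_r {a b : ℕ} (u : Fin a → Bool) (v : Fin b → Bool) :
    (fun j => Fin.append u v (Fin.natAdd a j)) = v := by
  funext j; rw [Fin.append_right]

lemma wt1_append {a b : ℕ} (u : Fin a → Bool) (v : Fin b → Bool) :
    wt1 (Fin.append u v) = wt1 u + wt1 v := by
  rw [wt1_add (Fin.append u v), restrict_app_l, restrict_app_r]
/-! ### backward: Std implies InTC -/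

lemma std_inTC : ∀ m, 1 ≤ m → ∀ f : (Fin m → Bool) → ℂ, Std f → InTC f := by
  intro M
  induction M using Nat.strong_induction_on with
  | _ m IH =>
    intro hm f hf
    classical
    set i₀ : Fin m := ⟨0, by omega⟩ with hi₀
    set p : Fin m → Prop :=
      fun j => j = i₀ ∨ (f (sg i₀) ≠ 0 ∧ f (sg j) ≠ 0 ∧ f (pr j i₀) = 0) with hp
    have fact1 : ∀ r r', p r → p r' → r ≠ r' → f (sg i₀) ≠ 0 → f (pr r r') = 0 := by
      intro r r' hr hr' hne hs
      rcases hr with rfl | ⟨-, hsr, hcr⟩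
      · rcases hr' with rfl | ⟨-, hsr', hcr'⟩
        · exact absurd rfl hne
        · rw [pr_comm]; exact hcr'
      · rcases hr' with rfl | ⟨-, hsr', hcr'⟩
        · exact hcr
        · have hrne : r ≠ i₀ := by
            intro hh; rw [hh, pr_self] at hcr; exact hs hcr
          have hr'ne : r' ≠ i₀ := by
            intro hh; rw [hh, pr_self] at hcr'; exact hs hcr'
          have h2 : f (pr i₀ r') = 0 := by rw [pr_comm]; exact hcr'
          exact hf.2.2 r i₀ r' hrne (fun hh => hr'ne hh.symm) hne hsr hs hsr' hcr h2
    have fact2 : ∀ l r, ¬ p l → p r → f (sg i₀) ≠ 0 → f (sg l) ≠ 0 → f (pr l r) ≠ 0 := by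
      intro l r hl hr hs hsl
      have hlji : l ≠ i₀ := fun hh => hl (Or.inl hh)
      have hlnc : f (pr l i₀) ≠ 0 := fun h0 => hl (Or.inr ⟨hs, hsl, h0⟩)
      rcases hr with rfl | ⟨-, hsr, hcr⟩
      · exact hlnc
      · have hrne : r ≠ i₀ := by
          intro hh; rw [hh, pr_self] at hcr; exact hs hcr
        have hlr : l ≠ r := fun hh => hl (by rw [hh]; exact Or.inr ⟨hs, hsr, hcr⟩)
        intro h0
        exact hlnc (hf.2.2 l r i₀ hlr hrne hlji hsl hsr hs h0 hcr)
    by_cases ha : ∀ j, p j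
    · by_cases hs : f (sg i₀) = 0
      · -- all variables pinned to i₀'s Δ₀ block: m = 1 and f is a multiple of Δ₀
        have hall : ∀ j : Fin m, j = i₀ := by
          intro j
          rcases ha j with h | ⟨hs', _, _⟩
          · exact h
          · exact absurd hs hs'
        have hm1 : m = 1 := by
          have := Fintype.card_eq_one_iff.2 ⟨i₀, hall⟩
          simpa using this
        refine inTC_atom (c := f zb) hf.1 (Or.inl ⟨hm1, fun x => rfl⟩) ?_
        intro x
        by_cases h0 : wt1 x = 0
        · rw [if_pos h0, mul_one, wt1_eq_zero h0]
        · obtain ⟨i, hi⟩ := exists_true_of_wt1_pos (x := x) (by omega)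
          have hxi₀ : x i₀ = true := (hall i) ▸ hi
          have hgx : ¬ Good f x := fun hg => hg.1 i₀ hxi₀ hs
          rw [if_neg h0, mul_zero, hf.2.1 x, if_neg hgx]
      · -- single block covering everything: f is a multiple of g_m
        have hsg : ∀ j, f (sg j) ≠ 0 := by
          intro j
          rcases ha j with rfl | ⟨_, hs', _⟩
          · exact hs
          · exact hs'
        have hpr0 : ∀ i j, i ≠ j → f (pr i j) = 0 := fun i j hij =>
          fact1 i j (ha i) (ha j) hij hs
        have hgood : ∀ x, Good f x ↔ wt1 x ≤ 1 := by
          intro x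
          constructor
          · intro hg
            exact wt1_le_one fun i j hij hi hj => hg.2 i j hij hi hj (hpr0 i j hij)
          · intro hw
            refine ⟨fun i _ => hsg i, fun i j hij hi hj => absurd hw ?_⟩
            have := two_le_wt1 hij hi hj; omega
        refine inTC_atom (c := f zb * q) (mul_ne_zero hf.1 q_ne_zero)
          (Or.inr ⟨hm, fun x => rfl⟩) ?_
        intro x
        rw [hf.2.1 x]
        by_cases hg : Good f x
        · have hw := (hgood x).1 hg
          rw [if_pos hg]
          interval_cases hj : wt1 x
          · norm_num [q]; ring
          · simp
        · rw [if_neg hg]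
          have hw : ¬ wt1 x ≤ 1 := fun hw => hg ((hgood x).2 hw)
          have h1 : wt1 x ≠ 0 := by omega
          have h2 : wt1 x ≠ 1 := by omega
          simp [h1, h2]
    · -- proper split
      push_neg at ha
      obtain ⟨l₀, hl₀⟩ := ha
      set a := Fintype.card {j : Fin m // ¬ p j} with hA
      set b := Fintype.card {j : Fin m // p j} with hB
      have ha1 : 1 ≤ a := Fintype.card_pos_iff.2 ⟨⟨l₀, hl₀⟩⟩
      have hb1 : 1 ≤ b := Fintype.card_pos_iff.2 ⟨⟨i₀, Or.inl rfl⟩⟩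
      set eA : Fin a ≃ {j : Fin m // ¬ p j} := (Fintype.equivFin _).symm with heA
      set eB : Fin b ≃ {j : Fin m // p j} := (Fintype.equivFin _).symm with heB
      set e : Fin (a + b) ≃ Fin m :=
        finSumFinEquiv.symm.trans ((eA.sumCongr eB).trans
          ((Equiv.sumComm _ _).trans (Equiv.sumCompl p))) with he
      have heL : ∀ i : Fin a, ¬ p (e (Fin.castAdd b i)) := by
        intro i
        simp only [he, Equiv.trans_apply, finSumFinEquiv_symm_apply_castAdd,
          Equiv.sumCongr_apply, Sum.map_inl, Equiv.sumComm_apply, Sum.swap_inl,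
          Equiv.sumCompl_apply_inr]
        exact (eA i).2
      have heR : ∀ j : Fin b, p (e (Fin.natAdd a j)) := by
        intro j
        simp only [he, Equiv.trans_apply, finSumFinEquiv_symm_apply_natAdd,
          Equiv.sumCongr_apply, Sum.map_inr, Equiv.sumComm_apply, Sum.swap_inr,
          Equiv.sumCompl_apply_inl]
        exact (eB j).2
      have ham : a + b = m := by
        have := Fintype.card_congr e
        simpa using this
      have haltm : a < m := by omega
      set fe : (Fin (a + b) → Bool) → ℂ := fun x => f (fun i => x (e.symm i)) with hfe_def
      have hfe : Std fe := std_reindex e hf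
      have fe_zb : fe zb = f zb := rfl
      have fe_sg : ∀ t, fe (sg t) = f (sg (e t)) := by
        intro t
        show f _ = _
        rw [reindex_sg e t]
      have fe_pr : ∀ t t', fe (pr t t') = f (pr (e t) (e t')) := by
        intro t t'
        show f _ = _
        rw [reindex_pr e t t']
      set F : (Fin a → Bool) → ℂ := fun u => fe (Fin.append u zb) with hF_def
      set G : (Fin b → Bool) → ℂ := fun v => fe (Fin.append zb v) with hG_def
      have F_zb : F zb = f zb := by
        show fe (Fin.append zb zb) = _
        rw [app_zb]
        exact fe_zb
      have F_sg : ∀ i, F (sg i) = fe (sg (Fin.castAdd b i)) := by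
        intro i; show fe _ = _; rw [app_sgL]
      have F_pr : ∀ i j, F (pr i j) = fe (pr (Fin.castAdd b i) (Fin.castAdd b j)) := by
        intro i j; show fe _ = _; rw [app_prLL]
      have cross : ∀ (i : Fin a) (j : Fin b), fe (sg (Fin.castAdd b i)) ≠ 0 →
          fe (sg (Fin.natAdd a j)) ≠ 0 → fe (pr (Fin.castAdd b i) (Fin.natAdd a j)) ≠ 0 := by
        intro i j hsi hsj
        rw [fe_sg] at hsi hsj
        rw [fe_pr]
        have hs : f (sg i₀) ≠ 0 := by
          rcases heR j with hh | ⟨hh, _, _⟩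
          · rwa [hh] at hsj
          · exact hh
        exact fact2 _ _ (heL i) (heR j) hs hsi
      have blockpair : ∀ (j j' : Fin b), j ≠ j' → f (sg i₀) ≠ 0 →
          fe (pr (Fin.natAdd a j) (Fin.natAdd a j')) = 0 := by
        intro j j' hne hs
        rw [fe_pr]
        exact fact1 _ _ (heR j) (heR j')
          (fun hh => hne (na_eq_na.1 (e.injective hh))) hs
      have goodsplit : ∀ x : Fin (a + b) → Bool,
          Good fe x ↔ (Good fe (Fin.append (fun i => x (Fin.castAdd b i)) zb) ∧
                       Good fe (Fin.append zb (fun j => x (Fin.natAdd a j)))) := by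
        intro x
        constructor
        · intro hg
          constructor
          · refine good_mono fe (fun k hk => ?_) hg
            rcases addCases_rep k with ⟨t, rfl⟩ | ⟨t, rfl⟩
            · rwa [Fin.append_left] at hk
            · rw [Fin.append_right] at hk; exact absurd hk (by simp [zb])
          · refine good_mono fe (fun k hk => ?_) hg
            rcases addCases_rep k with ⟨t, rfl⟩ | ⟨t, rfl⟩
            · rw [Fin.append_left] at hk; exact absurd hk (by simp [zb])
            · rwa [Fin.append_right] at hk
        · rintro ⟨hgL, hgR⟩
          constructor
          · intro k hk
            rcases addCases_rep k with ⟨t, rfl⟩ | ⟨t, rfl⟩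
            · exact hgL.1 (Fin.castAdd b t) (by rw [Fin.append_left]; exact hk)
            · exact hgR.1 (Fin.natAdd a t) (by rw [Fin.append_right]; exact hk)
          · intro k k' hne hk hk'
            rcases addCases_rep k with ⟨t, rfl⟩ | ⟨t, rfl⟩ <;>
              rcases addCases_rep k' with ⟨t', rfl⟩ | ⟨t', rfl⟩
            · exact hgL.2 _ _ hne (by rw [Fin.append_left]; exact hk)
                (by rw [Fin.append_left]; exact hk')
            · exact cross t t' (hgL.1 _ (by rw [Fin.append_left]; exact hk))
                (hgR.1 _ (by rw [Fin.append_right]; exact hk'))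
            · rw [pr_comm]
              exact cross t' t (hgL.1 _ (by rw [Fin.append_left]; exact hk'))
                (hgR.1 _ (by rw [Fin.append_right]; exact hk))
            · exact hgR.2 _ _ hne (by rw [Fin.append_right]; exact hk)
                (by rw [Fin.append_right]; exact hk')
      have claim1 : ∀ x, fe x = (f zb)⁻¹ * tensorSig F G x := by
        intro x
        have hTx : tensorSig F G x = fe (Fin.append (fun i => x (Fin.castAdd b i)) zb) *
            fe (Fin.append zb (fun j => x (Fin.natAdd a j))) := rfl
        rw [hTx, hfe.2.1 x, hfe.2.1 (Fin.append (fun i => x (Fin.castAdd b i)) zb),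
          hfe.2.1 (Fin.append zb (fun j => x (Fin.natAdd a j))), fe_zb]
        by_cases hg : Good fe x
        · obtain ⟨hgL, hgR⟩ := (goodsplit x).1 hg
          rw [if_pos hg, if_pos hgL, if_pos hgR]
          simp only [wt1_append, wt1_zb, add_zero, zero_add]
          rw [wt1_add x, eq_inv_mul_iff_mul_eq₀ hf.1, pow_add]
          ring
        · rw [if_neg hg]
          by_cases hgL : Good fe (Fin.append (fun i => x (Fin.castAdd b i)) zb)
          · have hgR : ¬ Good fe (Fin.append zb (fun j => x (Fin.natAdd a j))) :=
              fun hh => hg ((goodsplit x).2 ⟨hgL, hh⟩)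
            rw [if_neg hgR, mul_zero, mul_zero]
          · rw [if_neg hgL, zero_mul, mul_zero]
      have goodF : ∀ u, Good F u ↔ Good fe (Fin.append u zb) := by
        intro u
        constructor
        · rintro ⟨h1, h2⟩
          constructor
          · intro k hk
            rcases addCases_rep k with ⟨t, rfl⟩ | ⟨t, rfl⟩
            · rw [Fin.append_left] at hk
              have := h1 t hk
              rwa [F_sg] at this
            · rw [Fin.append_right] at hk; exact absurd hk (by simp [zb])
          · intro k k' hne hk hk'
            rcases addCases_rep k' with ⟨t', rfl⟩ | ⟨t', rfl⟩
            · rcases addCases_rep k with ⟨t, rfl⟩ | ⟨t, rfl⟩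
              · rw [Fin.append_left] at hk hk'
                have := h2 t t' (fun hh => hne (by rw [hh])) hk hk'
                rwa [F_pr] at this
              · rw [Fin.append_right] at hk; exact absurd hk (by simp [zb])
            · rw [Fin.append_right] at hk'; exact absurd hk' (by simp [zb])
        · rintro ⟨h1, h2⟩
          refine ⟨fun i hi => ?_, fun i j hij hi hj => ?_⟩
          · rw [F_sg]
            exact h1 (Fin.castAdd b i) (by rw [Fin.append_left]; exact hi)
          · rw [F_pr]
            exact h2 _ _ (fun hh => hij (ca_eq_ca.1 hh))
              (by rw [Fin.append_left]; exact hi) (by rw [Fin.append_left]; exact hj)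
      have hstdF : Std F := by
        refine ⟨?_, fun u => ?_, ?_⟩
        · rw [F_zb]; exact hf.1
        · show fe (Fin.append u zb) = _
          rw [hfe.2.1 (Fin.append u zb), fe_zb, F_zb]
          simp only [wt1_append, wt1_zb, add_zero]
          by_cases hg : Good fe (Fin.append u zb)
          · rw [if_pos hg, if_pos ((goodF u).2 hg)]
          · rw [if_neg hg, if_neg (fun hh => hg ((goodF u).1 hh))]
        · intro i j k hij hjk hik s1 s2 s3 p1 p2
          rw [F_sg] at s1 s2 s3
          rw [F_pr] at p1 p2 ⊢
          exact hfe.2.2 _ _ _ (fun hh => hij (ca_eq_ca.1 hh)) (fun hh => hjk (ca_eq_ca.1 hh))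
            (fun hh => hik (ca_eq_ca.1 hh)) s1 s2 s3 p1 p2
      have hGtc : InTC G := by
        by_cases hs : f (sg i₀) = 0
        · have hponly : ∀ j : Fin m, p j → j = i₀ := by
            intro j hj
            rcases hj with h | ⟨hs', _, _⟩
            · exact h
            · exact absurd hs hs'
          have hbone : b = 1 := by
            rw [hB, Fintype.card_eq_one_iff]
            exact ⟨⟨i₀, Or.inl rfl⟩, fun j => Subtype.ext (hponly j.1 j.2)⟩
          refine inTC_atom (c := f zb) hf.1 (Or.inl ⟨hbone, fun v => rfl⟩) ?_
          intro v
          by_cases h0 : wt1 v = 0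
          · rw [if_pos h0, mul_one, wt1_eq_zero h0]
            show fe (Fin.append zb zb) = f zb
            rw [app_zb]
            exact fe_zb
          · obtain ⟨j, hj⟩ := exists_true_of_wt1_pos (x := v) (by omega)
            have hsj : fe (sg (Fin.natAdd a j)) = 0 := by
              rw [fe_sg, hponly _ (heR j)]
              exact hs
            have hng : ¬ Good fe (Fin.append zb v) := fun hg =>
              (hg.1 (Fin.natAdd a j) (by rw [Fin.append_right]; exact hj)) hsj
            rw [if_neg h0, mul_zero]
            show fe (Fin.append zb v) = 0
            rw [hfe.2.1, if_neg hng]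
        · have hsgB : ∀ j : Fin b, fe (sg (Fin.natAdd a j)) ≠ 0 := by
            intro j
            rw [fe_sg]
            rcases heR j with hh | ⟨-, hs', -⟩
            · rw [hh]; exact hs
            · exact hs'
          have hgoodG : ∀ v : Fin b → Bool, Good fe (Fin.append zb v) ↔ wt1 v ≤ 1 := by
            intro v
            constructor
            · intro hg
              refine wt1_le_one fun j j' hne hj hj' => ?_
              have := hg.2 (Fin.natAdd a j) (Fin.natAdd a j')
                (fun hh => hne (na_eq_na.1 hh))
                (by rw [Fin.append_right]; exact hj) (by rw [Fin.append_right]; exact hj')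
              exact this (blockpair j j' hne hs)
            · intro hw
              constructor
              · intro k hk
                rcases addCases_rep k with ⟨t, rfl⟩ | ⟨t, rfl⟩
                · rw [Fin.append_left] at hk; exact absurd hk (by simp [zb])
                · exact hsgB t
              · intro k k' hne hk hk'
                rcases addCases_rep k with ⟨t, rfl⟩ | ⟨t, rfl⟩
                · rw [Fin.append_left] at hk; exact absurd hk (by simp [zb])
                rcases addCases_rep k' with ⟨t', rfl⟩ | ⟨t', rfl⟩
                · rw [Fin.append_left] at hk'; exact absurd hk' (by simp [zb])
                rw [Fin.append_right] at hk hk'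
                exact absurd hw (by have := two_le_wt1 (fun hh => hne (by rw [hh])) hk hk'; omega)
          refine inTC_atom (c := f zb * q) (mul_ne_zero hf.1 q_ne_zero)
            (Or.inr ⟨hb1, fun v => rfl⟩) ?_
          intro v
          show fe (Fin.append zb v) = _
          rw [hfe.2.1 (Fin.append zb v), fe_zb]
          simp only [wt1_append, wt1_zb, zero_add]
          by_cases hg : Good fe (Fin.append zb v)
          · have hw := (hgoodG v).1 hg
            rw [if_pos hg]
            interval_cases hj : wt1 v
            · norm_num [q]; ring
            · simp
          · rw [if_neg hg]
            have hw : ¬ wt1 v ≤ 1 := fun hw => hg ((hgoodG v).2 hw)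
            have h1 : wt1 v ≠ 0 := by omega
            have h2 : wt1 v ≠ 1 := by omega
            simp [h1, h2]
      have hInTCfe : InTC fe :=
        inTC_congr claim1 (inTC_smul (inv_ne_zero hf.1)
          (inTC_tensor (IH a haltm ha1 F hstdF) hGtc))
      exact inTC_reindex e f hInTCfe
/-! ### pinning lemmas -/

def tr {N : ℕ} (u v w : Fin N) : Fin N → Bool :=
  fun k => decide (k = u) || decide (k = v) || decide (k = w)

section Ins

variable {N : ℕ} (i : Fin (N + 1))

lemma ins_zb : i.insertNth false zb = zb := by
  funext k
  rcases eq_or_ne k i with rfl | hk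
  · rw [Fin.insertNth_apply_same]; rfl
  · obtain ⟨t, rfl⟩ := Fin.exists_succAbove_eq hk
    rw [Fin.insertNth_apply_succAbove]; rfl

lemma ins_true_zb : i.insertNth true zb = sg i := by
  funext k
  rcases eq_or_ne k i with rfl | hk
  · rw [Fin.insertNth_apply_same]; simp [sg]
  · obtain ⟨t, rfl⟩ := Fin.exists_succAbove_eq hk
    rw [Fin.insertNth_apply_succAbove]
    simp [sg, zb, Fin.succAbove_ne _ t]

lemma ins_sg (j : Fin N) : i.insertNth false (sg j) = sg (i.succAbove j) := by
  funext k
  rcases eq_or_ne k i with rfl | hk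
  · rw [Fin.insertNth_apply_same]
    simp [sg, (Fin.succAbove_ne _ j).symm]
  · obtain ⟨t, rfl⟩ := Fin.exists_succAbove_eq hk
    rw [Fin.insertNth_apply_succAbove]
    simp [sg, decide_eq_decide, Fin.succAbove_right_inj]

lemma ins_pr (j l : Fin N) :
    i.insertNth false (pr j l) = pr (i.succAbove j) (i.succAbove l) := by
  funext k
  rcases eq_or_ne k i with rfl | hk
  · rw [Fin.insertNth_apply_same]
    simp [pr, (Fin.succAbove_ne _ j).symm, (Fin.succAbove_ne _ l).symm]
  · obtain ⟨t, rfl⟩ := Fin.exists_succAbove_eq hk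
    rw [Fin.insertNth_apply_succAbove]
    simp [pr, decide_eq_decide, Fin.succAbove_right_inj]

lemma ins_true_sg (j : Fin N) : i.insertNth true (sg j) = pr i (i.succAbove j) := by
  funext k
  rcases eq_or_ne k i with rfl | hk
  · rw [Fin.insertNth_apply_same]; simp [pr]
  · obtain ⟨t, rfl⟩ := Fin.exists_succAbove_eq hk
    rw [Fin.insertNth_apply_succAbove]
    simp [sg, pr, decide_eq_decide, Fin.succAbove_right_inj, Fin.succAbove_ne _ t]

lemma ins_true_pr (j l : Fin N) :
    i.insertNth true (pr j l) = tr i (i.succAbove j) (i.succAbove l) := by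
  funext k
  rcases eq_or_ne k i with rfl | hk
  · rw [Fin.insertNth_apply_same]; simp [tr]
  · obtain ⟨t, rfl⟩ := Fin.exists_succAbove_eq hk
    rw [Fin.insertNth_apply_succAbove]
    simp [pr, tr, decide_eq_decide, Fin.succAbove_right_inj, Fin.succAbove_ne _ t]

lemma wt1_ins (c : Bool) (y : Fin N → Bool) :
    wt1 (i.insertNth c y) = (if c = true then 1 else 0) + wt1 y := by
  rw [wt1_eq_sum, wt1_eq_sum]
  have h := Fin.sum_univ_succAbove
    (fun k => if (i.insertNth c y : Fin (N+1) → Bool) k = true then (1 : ℕ) else 0) i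
  simp only [Fin.insertNth_apply_same, Fin.insertNth_apply_succAbove] at h
  exact h

end Ins

lemma hfree3 {n : ℕ} (hn : 3 ≤ n) (i j k : Fin (n + 1)) :
    ∃ t : Fin (n + 1), t ≠ i ∧ t ≠ j ∧ t ≠ k := by
  classical
  have hcard : ({i, j, k} : Finset (Fin (n + 1))).card ≤ 3 := by
    calc ({i, j, k} : Finset (Fin (n + 1))).card
        ≤ ({j, k} : Finset (Fin (n + 1))).card + 1 := Finset.card_insert_le _ _
      _ ≤ (({k} : Finset (Fin (n + 1))).card + 1) + 1 := by
          exact Nat.add_le_add_right (Finset.card_insert_le j ({k} : Finset (Fin (n + 1)))) 1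
      _ = 3 := by simp
  have hne : (({i, j, k} : Finset (Fin (n + 1)))ᶜ).Nonempty := by
    rw [← Finset.card_pos, Finset.card_compl]
    simp only [Fintype.card_fin]
    omega
  obtain ⟨t, ht⟩ := hne
  simp only [Finset.mem_compl, Finset.mem_insert, Finset.mem_singleton, not_or] at ht
  exact ⟨t, ht.1, ht.2.1, ht.2.2⟩


/-- if `f` has arity `n + 1 ≥ 4` and every pinning `f^{xᵢ=c}`
lies in the tensor closure `⟨S⟩`, then `f` lies in `⟨S⟩`. -/
theorem stmt7 {n : ℕ} (hn : 3 ≤ n) (f : (Fin (n + 1) → Bool) → ℂ)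
    (hpin : ∀ (i : Fin (n + 1)) (c : Bool), InTC (pinSig f i c)) :
    InTC f := by
  classical
  by_cases hz : ∀ x, f x = 0
  · exact Or.inl hz
  push_neg at hz
  obtain ⟨x₀, hx₀⟩ := hz
  have hstd : ∀ (i : Fin (n + 1)) (c : Bool) (y : Fin n → Bool),
      f (i.insertNth c y) ≠ 0 → Std (pinSig f i c) := by
    intro i c y hy
    rcases inTC_std (hpin i c) with hzz | h
    · exact absurd (hzz y) hy
    · exact h
  -- M0 : f zb ≠ 0
  have hM0 : f zb ≠ 0 := by
    set i : Fin (n + 1) := ⟨0, by omega⟩ with hidef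
    have hx : i.insertNth (x₀ i) (i.removeNth x₀) = x₀ := Fin.insertNth_self_removeNth ..
    have hstd1 : Std (pinSig f i (x₀ i)) :=
      hstd i (x₀ i) (i.removeNth x₀) (by rw [hx]; exact hx₀)
    have h1 : f (i.insertNth (x₀ i) zb) ≠ 0 := hstd1.1
    cases hc : x₀ i with
    | false => rw [hc] at h1; rwa [ins_zb] at h1
    | true =>
      rw [hc] at h1
      rw [ins_true_zb] at h1
      set j : Fin (n + 1) := Fin.last n with hjdef
      have hji : (sg i : Fin (n + 1) → Bool) j = false := by
        simp only [sg, hjdef, hidef, decide_eq_false_iff_not, Fin.ext_iff, Fin.val_last]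
        omega
      have hx2 : j.insertNth ((sg i : Fin (n+1) → Bool) j) (j.removeNth (sg i)) = sg i :=
        Fin.insertNth_self_removeNth ..
      rw [hji] at hx2
      have hstd2 : Std (pinSig f j false) :=
        hstd j false (j.removeNth (sg i)) (by rw [hx2]; exact h1)
      have h2 : f (j.insertNth false zb) ≠ 0 := hstd2.1
      rwa [ins_zb] at h2
  -- Good transfer for pinning at false
  have hgood_pin : ∀ (i : Fin (n + 1)) (y : Fin n → Bool),
      Good (pinSig f i false) y ↔ Good f (i.insertNth false y) := by
    intro i y
    constructor
    · rintro ⟨h1, h2⟩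
      constructor
      · intro k hk
        rcases eq_or_ne k i with rfl | hne
        · rw [Fin.insertNth_apply_same] at hk; exact absurd hk (by simp)
        · obtain ⟨t, rfl⟩ := Fin.exists_succAbove_eq hne
          rw [Fin.insertNth_apply_succAbove] at hk
          have := h1 t hk
          show f (sg (i.succAbove t)) ≠ 0
          rw [← ins_sg]
          exact this
      · intro k k' hne hk hk'
        rcases eq_or_ne k i with rfl | hki
        · rw [Fin.insertNth_apply_same] at hk; exact absurd hk (by simp)
        rcases eq_or_ne k' i with rfl | hki'
        · rw [Fin.insertNth_apply_same] at hk'; exact absurd hk' (by simp)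
        obtain ⟨t, rfl⟩ := Fin.exists_succAbove_eq hki
        obtain ⟨t', rfl⟩ := Fin.exists_succAbove_eq hki'
        rw [Fin.insertNth_apply_succAbove] at hk hk'
        have := h2 t t' (fun hh => hne (by rw [hh])) hk hk'
        show f (pr (i.succAbove t) (i.succAbove t')) ≠ 0
        rw [← ins_pr]
        exact this
    · rintro ⟨h1, h2⟩
      constructor
      · intro t ht
        have : f (i.insertNth false (sg t)) ≠ 0 := by
          rw [ins_sg]
          exact h1 _ (by rw [Fin.insertNth_apply_succAbove]; exact ht)
        exact this
      · intro t t' hne ht ht'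
        have : f (i.insertNth false (pr t t')) ≠ 0 := by
          rw [ins_pr]
          exact h2 _ _ (fun hh => hne (Fin.succAbove_right_inj.1 hh))
            (by rw [Fin.insertNth_apply_succAbove]; exact ht)
            (by rw [Fin.insertNth_apply_succAbove]; exact ht')
        exact this
  -- M1 for strings with a false coordinate
  have hM1A : ∀ (x : Fin (n + 1) → Bool) (i : Fin (n + 1)), x i = false →
      f x = if Good f x then f zb * q ^ wt1 x else 0 := by
    intro x i hxi
    have hx : i.insertNth (x i) (i.removeNth x) = x := Fin.insertNth_self_removeNth ..
    rw [hxi] at hx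
    have hstdi : Std (pinSig f i false) :=
      hstd i false zb (by rw [ins_zb]; exact hM0)
    have hval := hstdi.2.1 (i.removeNth x)
    have hz' : pinSig f i false zb = f zb := by show f _ = _; rw [ins_zb]
    rw [hz'] at hval
    rw [← hx, wt1_ins]
    simp only [if_neg (by simp : ¬ (false = true)), zero_add]
    by_cases hg : Good f (i.insertNth false (i.removeNth x))
    · rw [if_pos hg]
      rw [if_pos ((hgood_pin i _).2 hg)] at hval
      exact hval
    · rw [if_neg hg]
      rw [if_neg (fun hh => hg ((hgood_pin i _).1 hh))] at hval
      exact hval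
  -- helpers from hM1A
  have aux_good : ∀ (x : Fin (n + 1) → Bool) (w : Fin (n + 1)), x w = false →
      f x ≠ 0 → Good f x := by
    intro x w hw hfx
    by_contra hg
    rw [hM1A x w hw, if_neg hg] at hfx
    exact hfx rfl
  have aux_nonzero : ∀ (x : Fin (n + 1) → Bool) (w : Fin (n + 1)), x w = false →
      Good f x → f x ≠ 0 := by
    intro x w hw hg
    rw [hM1A x w hw, if_pos hg]
    exact mul_ne_zero hM0 (pow_ne_zero _ q_ne_zero)
  -- M1 in general
  have hM1 : ∀ x, f x = if Good f x then f zb * q ^ wt1 x else 0 := by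
    intro x
    by_cases hex : ∃ i, x i = false
    · obtain ⟨i, hi⟩ := hex
      exact hM1A x i hi
    · push_neg at hex
      have hall : ∀ i, x i = true := by
        intro i
        cases h : x i
        · exact absurd h (hex i)
        · rfl
      set i0 : Fin (n + 1) := ⟨0, by omega⟩ with hi0
      have hx : i0.insertNth true (i0.removeNth x) = x := by
        have h := (Fin.insertNth_self_removeNth .. :
          i0.insertNth (x i0) (i0.removeNth x) = x)
        rwa [hall i0] at h
      by_cases hk0 : ∀ y, pinSig f i0 true y = 0
      · have hfx0 : f x = 0 := by rw [← hx]; exact hk0 (i0.removeNth x)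
        have hsg0 : f (sg i0) = 0 := by
          have h := hk0 zb
          show f (sg i0) = 0
          rw [← ins_true_zb]
          exact h
        rw [hfx0, if_neg (fun hg => hg.1 i0 (hall i0) hsg0)]
      · push_neg at hk0
        obtain ⟨y₀, hy₀⟩ := hk0
        have hstdk : Std (pinSig f i0 true) := by
          rcases inTC_std (hpin i0 true) with hzz | h
          · exact absurd (hzz y₀) hy₀
          · exact h
        have hsgi0 : f (sg i0) ≠ 0 := by
          have h := hstdk.1
          show f (sg i0) ≠ 0
          rw [← ins_true_zb]
          exact h
        have hsgval : f (sg i0) = f zb * q := by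
          have h := hM1A (sg i0) (Fin.last n)
            (by
              simp only [sg, decide_eq_false_iff_not, Fin.ext_iff, Fin.val_last, hi0]
              omega)
          rw [wt1_sg, pow_one] at h
          by_cases hg : Good f (sg i0)
          · rwa [if_pos hg] at h
          · rw [if_neg hg] at h; exact absurd h hsgi0
        have hvalk := hstdk.2.1 (i0.removeNth x)
        have hkzb : pinSig f i0 true zb = f (sg i0) := by
          show f _ = _; rw [ins_true_zb]
        rw [hkzb] at hvalk
        have hgk : Good (pinSig f i0 true) (i0.removeNth x) ↔ Good f x := by
          constructor
          · rintro ⟨h1, h2⟩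
            constructor
            · intro k hk
              rcases eq_or_ne k i0 with rfl | hne
              · exact hsgi0
              · obtain ⟨t, rfl⟩ := Fin.exists_succAbove_eq hne
                have hp : f (pr i0 (i0.succAbove t)) ≠ 0 := by
                  rw [← ins_true_sg]
                  exact h1 t (by
                    show x (i0.succAbove t) = true
                    exact hall _)
                obtain ⟨w, hw1, hw2, _⟩ := hfree3 hn i0 (i0.succAbove t) (i0.succAbove t)
                have hgp : Good f (pr i0 (i0.succAbove t)) :=
                  aux_good _ w (by simp [pr, hw1, hw2]) hp
                exact hgp.1 (i0.succAbove t) (by simp [pr])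
            · intro u v huv hu hv
              rcases eq_or_ne u i0 with rfl | hui
              · obtain ⟨t, rfl⟩ := Fin.exists_succAbove_eq huv.symm
                have h := h1 t (by show x (i0.succAbove t) = true; exact hall _)
                show f (pr i0 (i0.succAbove t)) ≠ 0
                rw [← ins_true_sg]
                exact h
              rcases eq_or_ne v i0 with rfl | hvi
              · obtain ⟨t, rfl⟩ := Fin.exists_succAbove_eq hui
                have h := h1 t (by show x (i0.succAbove t) = true; exact hall _)
                rw [pr_comm]
                show f (pr i0 (i0.succAbove t)) ≠ 0
                rw [← ins_true_sg]
                exact h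
              · obtain ⟨t, rfl⟩ := Fin.exists_succAbove_eq hui
                obtain ⟨t', rfl⟩ := Fin.exists_succAbove_eq hvi
                have hp : f (tr i0 (i0.succAbove t) (i0.succAbove t')) ≠ 0 := by
                  rw [← ins_true_pr]
                  exact h2 t t' (fun hh => huv (by rw [hh]))
                    (by show x (i0.succAbove t) = true; exact hall _)
                    (by show x (i0.succAbove t') = true; exact hall _)
                obtain ⟨w, hw1, hw2, hw3⟩ :=
                  hfree3 hn i0 (i0.succAbove t) (i0.succAbove t')
                have hgp : Good f (tr i0 (i0.succAbove t) (i0.succAbove t')) :=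
                  aux_good _ w (by simp [tr, hw1, hw2, hw3]) hp
                exact hgp.2 _ _ huv (by simp [tr]) (by simp [tr])
          · intro hg
            constructor
            · intro t _
              obtain ⟨w, hw1, hw2, _⟩ := hfree3 hn i0 (i0.succAbove t) (i0.succAbove t)
              have : f (pr i0 (i0.succAbove t)) ≠ 0 :=
                aux_nonzero _ w (by simp [pr, hw1, hw2])
                  (good_mono f (fun k _ => hall k) hg)
              show pinSig f i0 true (sg t) ≠ 0
              show f _ ≠ 0
              rw [ins_true_sg]
              exact this
            · intro t t' hne _ _
              obtain ⟨w, hw1, hw2, hw3⟩ :=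
                hfree3 hn i0 (i0.succAbove t) (i0.succAbove t')
              have : f (tr i0 (i0.succAbove t) (i0.succAbove t')) ≠ 0 :=
                aux_nonzero _ w (by simp [tr, hw1, hw2, hw3])
                  (good_mono f (fun k _ => hall k) hg)
              show f _ ≠ 0
              rw [ins_true_pr]
              exact this
        have hfx : f x = pinSig f i0 true (i0.removeNth x) := (congrArg f hx).symm
        have hwt : wt1 x = wt1 (i0.removeNth x) + 1 := by
          conv_lhs => rw [← hx]
          rw [wt1_ins, if_pos rfl]
          omega
        rw [hfx, hvalk, hwt]
        by_cases hg : Good f x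
        · rw [if_pos (hgk.2 hg), if_pos hg, hsgval, pow_succ]
          ring
        · rw [if_neg (fun hh => hg (hgk.1 hh)), if_neg hg]
  -- M2 : transitivity
  have hM2 : ∀ i j k : Fin (n + 1), i ≠ j → j ≠ k → i ≠ k →
      f (sg i) ≠ 0 → f (sg j) ≠ 0 → f (sg k) ≠ 0 →
      f (pr i j) = 0 → f (pr j k) = 0 → f (pr i k) = 0 := by
    intro i j k hij hjk hik s1 s2 s3 p1 p2
    obtain ⟨t, hti, htj, htk⟩ := hfree3 hn i j k
    have hstdt : Std (pinSig f t false) := hstd t false zb (by rw [ins_zb]; exact hM0)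
    obtain ⟨i', rfl⟩ := Fin.exists_succAbove_eq hti.symm
    obtain ⟨j', rfl⟩ := Fin.exists_succAbove_eq htj.symm
    obtain ⟨k', rfl⟩ := Fin.exists_succAbove_eq htk.symm
    have s1' : pinSig f t false (sg i') ≠ 0 := by
      show f _ ≠ 0; rw [ins_sg]; exact s1
    have s2' : pinSig f t false (sg j') ≠ 0 := by
      show f _ ≠ 0; rw [ins_sg]; exact s2
    have s3' : pinSig f t false (sg k') ≠ 0 := by
      show f _ ≠ 0; rw [ins_sg]; exact s3
    have p1' : pinSig f t false (pr i' j') = 0 := by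
      show f _ = 0; rw [ins_pr]; exact p1
    have p2' : pinSig f t false (pr j' k') = 0 := by
      show f _ = 0; rw [ins_pr]; exact p2
    have hres := hstdt.2.2 i' j' k'
      (fun hh => hij (by rw [hh])) (fun hh => hjk (by rw [hh])) (fun hh => hik (by rw [hh]))
      s1' s2' s3' p1' p2'
    have : f (t.insertNth false (pr i' k')) = 0 := hres
    rwa [ins_pr] at this
  exact std_inTC (n + 1) (by omega) f ⟨hM0, hM1, hM2⟩
end
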